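/- Let b ≥ 2 be an integer, let p be a prime and α ≥ 1 an integer with p^α ∣ b and p^{α+1} ∤ b. Let D be a finite nonempty set of nonnegative integers satisfying the Kenyon condition with respect to b. Then for every ℓ with 0 ≤ ℓ ≤ α−1 there exists an integer a ≥ 1 with a ≡ ℓ (mod α) such that the cyclotomic polynomial Φ_{p^a}(X) divides P_D(X) in ℤ[X]. -/

import Mathlib

open Polynomial

/-- The mask polynomial `P_A(X) = ∑_{a ∈ A} X^a ∈ ℤ[X]` of a finite set of naturals. -/
noncomputable def mask (A : Finset ℕ) : Polynomial ℤ := ∑ a ∈ A, X ^ a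

/-- The Kenyon condition with respect to `b`: for every `m ≥ 1` there is `k ≥ 1` with
`P_D(e^{2πim/b^k}) = 0`. -/
def Kenyon (b : ℕ) (D : Finset ℕ) : Prop :=
  ∀ m : ℕ, 1 ≤ m → ∃ k : ℕ, 1 ≤ k ∧
    Polynomial.aeval (Complex.exp (2 * Real.pi * Complex.I * (m : ℂ) / (b : ℂ) ^ k)) (mask D) = 0

theorem stmt0 (b p α : ℕ) (hb : 2 ≤ b) (hp : p.Prime) (hα : 1 ≤ α)
    (hdvd : p ^ α ∣ b) (hndvd : ¬ p ^ (α + 1) ∣ b)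
    (D : Finset ℕ) (hD : D.Nonempty) (hK : Kenyon b D) :
    ∀ ℓ : ℕ, ℓ < α → ∃ a : ℕ, 1 ≤ a ∧ a % α = ℓ ∧ cyclotomic (p ^ a) ℤ ∣ mask D := by
  intro ℓ hℓ
  -- basic setup
  set u : ℕ := b / p ^ α with hu
  have hbu : b = p ^ α * u := (Nat.mul_div_cancel' hdvd).symm
  have hb0 : b ≠ 0 := by omega
  have hu0 : u ≠ 0 := by
    intro h; rw [h, mul_zero] at hbu; omega
  have hp0 : p ≠ 0 := hp.ne_zero
  have hpu : ¬ p ∣ u := by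
    intro ⟨c, hc⟩
    exact hndvd ⟨c, by rw [hbu, hc, pow_succ]; ring⟩
  have hcop_pu : Nat.Coprime p u := (Nat.Prime.coprime_iff_not_dvd hp).2 hpu
  -- the mask polynomial is nonzero
  have hmask1 : (mask D).eval 1 = (D.card : ℤ) := by
    simp [mask, eval_finset_sum]
  have hmne : mask D ≠ 0 := by
    intro h
    rw [h, eval_zero] at hmask1
    have := hD.card_pos
    omega
  -- parameters
  obtain ⟨N, hN⟩ : ∃ N, N = (mask D).natDegree := ⟨_, rfl⟩
  obtain ⟨t, htdef⟩ : ∃ t, t = (α - ℓ) % α := ⟨_, rfl⟩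
  have ht : t < α := htdef ▸ Nat.mod_lt _ (by omega)
  obtain ⟨M, hM⟩ : ∃ M, M = N + t := ⟨_, rfl⟩
  have hm1 : 1 ≤ p ^ t * u ^ M :=
    Nat.one_le_iff_ne_zero.2 (by positivity)
  obtain ⟨k, hk1, hroot⟩ := hK (p ^ t * u ^ M) hm1
  have hαk : α ≤ α * k := Nat.le_mul_of_pos_right α (by omega)
  obtain ⟨a, hadef⟩ : ∃ a, a = α * k - t := ⟨_, rfl⟩
  have ha1 : 1 ≤ a := by omega
  obtain ⟨n, hndef⟩ : ∃ n, n = p ^ a * u ^ (k - M) := ⟨_, rfl⟩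
  obtain ⟨c, hcdef⟩ : ∃ c, c = u ^ (M - k) := ⟨_, rfl⟩
  have hn0 : n ≠ 0 := by rw [hndef]; positivity
  -- the key arithmetic identity
  have key : (p ^ t * u ^ M) * n = b ^ k * c := by
    rw [hndef, hcdef]
    calc (p ^ t * u ^ M) * (p ^ a * u ^ (k - M))
        = p ^ (t + a) * u ^ (M + (k - M)) := by rw [pow_add, pow_add]; ring
      _ = p ^ (α * k) * u ^ (k + (M - k)) := by
          congr 2 <;> omega
      _ = b ^ k * u ^ (M - k) := by
          rw [hbu, mul_pow, ← pow_mul, pow_add]; ring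
  -- the root is a primitive n-th root of unity
  have hcast : (p : ℂ) ^ t * (u : ℂ) ^ M * (n : ℂ) = ((b : ℂ)) ^ k * (c : ℂ) := by
    exact_mod_cast key
  have hbC : ((b : ℂ)) ^ k ≠ 0 := pow_ne_zero _ (by exact_mod_cast hb0)
  have hnC : (n : ℂ) ≠ 0 := by exact_mod_cast hn0
  have harg : 2 * (Real.pi : ℂ) * Complex.I * ((p ^ t * u ^ M : ℕ) : ℂ) / (b : ℂ) ^ k
      = (c : ℕ) * (2 * (Real.pi : ℂ) * Complex.I / (n : ℂ)) := by
    have h : ((p ^ t * u ^ M : ℕ) : ℂ) = (p : ℂ) ^ t * (u : ℂ) ^ M := by push_cast; ring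
    rw [h]
    field_simp
    linear_combination hcast
  have hcop : Nat.Coprime c n := by
    rcases le_or_gt k M with h | h
    · have hk0 : k - M = 0 := by omega
      rw [hndef, hcdef, hk0, pow_zero, mul_one]
      exact Nat.Coprime.pow _ _ hcop_pu.symm
    · have hM0 : M - k = 0 := by omega
      rw [hcdef, hM0, pow_zero]
      exact Nat.coprime_one_left _
  have hprim : IsPrimitiveRoot
      (Complex.exp (2 * Real.pi * Complex.I * ((p ^ t * u ^ M : ℕ) : ℂ) / (b : ℂ) ^ k)) n := by
    have h1 : IsPrimitiveRoot (Complex.exp (2 * Real.pi * Complex.I / (n : ℂ))) n :=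
      Complex.isPrimitiveRoot_exp n hn0
    have := h1.pow_of_coprime c hcop
    rwa [← Complex.exp_nat_mul, ← harg] at this
  -- cyclotomic n divides the mask polynomial over ℤ
  have hdvd' : cyclotomic n ℤ ∣ mask D := by
    rw [cyclotomic_eq_minpoly hprim (Nat.pos_of_ne_zero hn0)]
    exact minpoly.isIntegrallyClosed_dvd (hprim.isIntegral (Nat.pos_of_ne_zero hn0)) hroot
  -- degree bound forces k ≤ M
  have hkM : k ≤ M := by
    by_contra hkM
    push_neg at hkM
    have hdeg : n.totient ≤ N := by
      have := Polynomial.natDegree_le_of_dvd hdvd' hmne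
      rwa [natDegree_cyclotomic, ← hN] at this
    have hpa : (p ^ a).totient ≤ n.totient := by
      refine Nat.le_of_dvd ?_ (Nat.totient_dvd_of_dvd ⟨u ^ (k - M), hndef⟩)
      exact Nat.totient_pos.2 (Nat.pos_of_ne_zero hn0)
    have h2a : a ≤ (p ^ a).totient := by
      rw [Nat.totient_prime_pow hp (by omega : 0 < a)]
      calc a ≤ 2 ^ (a - 1) := by
              have := Nat.lt_two_pow_self (n := a - 1); omega
        _ ≤ p ^ (a - 1) := Nat.pow_le_pow_left hp.two_le _
        _ ≤ p ^ (a - 1) * (p - 1) := Nat.le_mul_of_pos_right _ (by have := hp.two_le; omega)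
    -- but a is large: a = α k - t ≥ α (M+1) - t ≥ M + 1 - t = N + 1
    have hbig : M + 1 ≤ α * k := by
      calc M + 1 ≤ k := by omega
        _ = 1 * k := (one_mul k).symm
        _ ≤ α * k := Nat.mul_le_mul_right k hα
    omega
  -- conclude: n = p ^ a
  have hnpa : n = p ^ a := by
    rw [hndef, show k - M = 0 by omega, pow_zero, mul_one]
  refine ⟨a, ha1, ?_, by rwa [← hnpa]⟩
  -- a % α = ℓ
  obtain ⟨k', rfl⟩ : ∃ k', k = k' + 1 := ⟨k - 1, by omega⟩
  have hαk' : α * (k' + 1) = α * k' + α := by ring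
  rcases Nat.eq_zero_or_pos ℓ with hℓ0 | hℓpos
  · have ht0 : t = 0 := by rw [htdef, hℓ0, Nat.sub_zero, Nat.mod_self]
    have : a = α * (k' + 1) := by omega
    rw [this, hℓ0, Nat.mul_mod_right]
  · have htval : t = α - ℓ := by
      rw [htdef]; exact Nat.mod_eq_of_lt (by omega)
    have : a = ℓ + α * k' := by omega
    rw [this, Nat.add_mul_mod_self_left, Nat.mod_eq_of_lt hℓ]
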